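/- arXiv:1706.06429 — 2 statements merged into one kernel-verified Lean document; each statement's English description precedes it below -/
import Mathlib

section
/- Let f : ℤ → ℝ be even, nonnegative, summable, and discretely convex on the positive integers, i.e. f(z+1) − 2f(z) + f(z−1) ≥ 0 for all z ≥ 1. Then its Fourier transform is nonnegative: ∑_{z∈ℤ} f(z) cos(zθ) ≥ 0 for all θ ∈ ℝ. -/
open Finset Filter Topology

private noncomputable def stmt1c (θ : ℝ) (k : ℕ) : ℝ :=
  (if k = 0 then 1 else 2) * Real.cos (k * θ)

private lemma stmt1_fejer (θ : ℝ) (M : ℕ) :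
    2 * ∑ k ∈ range M, ((M : ℝ) - k) * Real.cos (k * θ) - M
      = (∑ k ∈ range M, Real.cos (k * θ)) ^ 2 + (∑ k ∈ range M, Real.sin (k * θ)) ^ 2 := by
  induction M with
  | zero => simp
  | succ M ih =>
    have hrefl : ∑ k ∈ range M, Real.cos ((M : ℝ) * θ - k * θ)
        = ∑ k ∈ range M, Real.cos (((k : ℝ) + 1) * θ) := by
      rw [← Finset.sum_range_reflect (fun j => Real.cos (((j : ℝ) + 1) * θ)) M]
      refine Finset.sum_congr rfl fun k hk => ?_
      have hk' : k < M := Finset.mem_range.mp hk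
      have h1 : M - 1 - k = M - (k + 1) := by omega
      have h2 : ((M - (k + 1) : ℕ) : ℝ) = (M : ℝ) - (k + 1) := by
        rw [Nat.cast_sub (by omega)]; push_cast; ring
      rw [h1, h2, show ((M:ℝ) - ((k:ℝ) + 1) + 1) * θ = (M:ℝ) * θ - (k:ℝ) * θ from by ring]
    have e2 : (∑ k ∈ range M, Real.cos (k * θ)) * Real.cos (M * θ)
        + (∑ k ∈ range M, Real.sin (k * θ)) * Real.sin (M * θ)
        = ∑ k ∈ range M, Real.cos (((k : ℝ) + 1) * θ) := by
      rw [Finset.sum_mul, Finset.sum_mul, ← Finset.sum_add_distrib, ← hrefl]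
      exact Finset.sum_congr rfl fun k _ => by rw [Real.cos_sub]; ring
    have key : ∑ k ∈ range M, Real.cos (k * θ) + Real.cos (M * θ)
        = ∑ k ∈ range M, Real.cos (((k : ℝ) + 1) * θ) + 1 := by
      rw [← Finset.sum_range_succ (fun k => Real.cos (k * θ)) M,
        Finset.sum_range_succ' (fun k => Real.cos (k * θ)) M]
      push_cast
      norm_num
    have e1 : ∑ k ∈ range M, ((M : ℝ) + 1 - k) * Real.cos (k * θ)
        = ∑ k ∈ range M, ((M : ℝ) - k) * Real.cos (k * θ)
          + ∑ k ∈ range M, Real.cos (k * θ) := by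
      rw [← Finset.sum_add_distrib]
      exact Finset.sum_congr rfl fun k _ => by ring
    have pyth := Real.sin_sq_add_cos_sq ((M : ℝ) * θ)
    rw [Finset.sum_range_succ, Finset.sum_range_succ, Finset.sum_range_succ]
    push_cast
    rw [e1]
    nlinarith [ih, e2, key, pyth]

section

variable {θ : ℝ} {a : ℕ → ℝ}

private lemma stmt1_core (ha0 : ∀ n, 0 ≤ a n) (hasum : Summable a)
    (hconv : ∀ n : ℕ, 0 ≤ a n - 2 * a (n + 1) + a (n + 2)) (θ : ℝ) :
    0 ≤ ∑' k : ℕ, a k * stmt1c θ k := by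
  -- basic definitions
  obtain ⟨b, hbdef⟩ : ∃ b : ℕ → ℝ, b = fun n => a n - a (n + 1) := ⟨_, rfl⟩
  obtain ⟨d, hddef⟩ : ∃ d : ℕ → ℝ, d = fun n => b n - b (n + 1) := ⟨_, rfl⟩
  have hbn : ∀ n, b n = a n - a (n + 1) := fun n => by rw [hbdef]
  have hdn : ∀ n, d n = b n - b (n + 1) := fun n => by rw [hddef]
  have hd0 : ∀ n, 0 ≤ d n := by
    intro n
    have h := hconv n
    rw [hdn, hbn, hbn]
    linarith
  have hanti : Antitone b := antitone_nat_of_succ_le fun n => by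
    have := hd0 n; rw [hdn] at this; linarith
  have ha_to0 : Tendsto a atTop (𝓝 0) := hasum.tendsto_atTop_zero
  have tail_tendsto : ∀ (u : ℕ → ℝ), Tendsto u atTop (𝓝 0) →
      ∀ n, Tendsto (fun N => u (n + N)) atTop (𝓝 0) := by
    intro u hu n
    have := hu.comp (tendsto_add_atTop_nat n)
    simpa [Function.comp_def, Nat.add_comm] using this
  -- b is nonnegative
  have hb0 : ∀ n, 0 ≤ b n := by
    intro n
    by_contra h
    push_neg at h
    have hstep : ∀ k : ℕ, a n + k * (-b n) ≤ a (n + k) := by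
      intro k
      induction k with
      | zero => simp
      | succ k ih =>
        have h1 : b (n + k) ≤ b n := hanti (by omega)
        have h2 : a (n + k + 1) = a (n + k) - b (n + k) := by rw [hbn]; ring
        have e : n + (k + 1) = n + k + 1 := rfl
        rw [e, h2]
        push_cast
        linarith
    have hlim := tail_tendsto a ha_to0 n
    have hev : ∀ᶠ k : ℕ in atTop, a (n + k) < -b n :=
      hlim.eventually_lt_const (by linarith)
    obtain ⟨k, hk1, hk2⟩ := (hev.and (eventually_ge_atTop 1)).exists
    have h3 := hstep k
    have h4 : (1 : ℝ) ≤ (k : ℝ) := by exact_mod_cast hk2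
    nlinarith [ha0 n]
  -- telescoping partial sums of b
  have Pb : ∀ n N, ∑ m ∈ range N, b (n + m) = a n - a (n + N) := by
    intro n N
    induction N with
    | zero => simp
    | succ N ih =>
      have e : n + (N + 1) = n + N + 1 := rfl
      rw [Finset.sum_range_succ, ih, hbn (n + N), e]
      ring
  have sum_b_le : ∀ n N, ∑ m ∈ range N, b (n + m) ≤ a n := by
    intro n N; rw [Pb]; have := ha0 (n + N); linarith
  have hb_tail : ∀ n, HasSum (fun m => b (n + m)) (a n) := by
    intro n
    have hs : Summable fun m => b (n + m) :=
      summable_of_sum_range_le (fun m => hb0 _) (sum_b_le n)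
    rw [hs.hasSum_iff_tendsto_nat]
    have : (fun N => ∑ m ∈ range N, b (n + m)) = fun N => a n - a (n + N) :=
      funext (Pb n)
    rw [this]
    simpa using tendsto_const_nhds.sub (tail_tendsto a ha_to0 n)
  have hb_sum : Summable b := by
    have := (hb_tail 0).summable
    simpa using this
  have hb_to0 : Tendsto b atTop (𝓝 0) := hb_sum.tendsto_atTop_zero
  -- N * b N → 0
  have hNb : Tendsto (fun N : ℕ => (N : ℝ) * b N) atTop (𝓝 0) := by
    have key : ∀ N : ℕ, (N : ℝ) * b N ≤ 2 * a (N / 2) := by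
      intro N
      have hcard : ((N - N / 2 : ℕ) : ℝ) * b N ≤ ∑ m ∈ range (N - N / 2), b (N / 2 + m) := by
        have h := Finset.card_nsmul_le_sum (range (N - N / 2))
          (fun m => b (N / 2 + m)) (b N)
          (fun m hm => hanti (by have := Finset.mem_range.mp hm; omega))
        simpa [Finset.card_range, nsmul_eq_mul] using h
      have hsum1 : ∑ m ∈ range (N - N / 2), b (N / 2 + m) = a (N / 2) - a N := by
        rw [Pb]
        congr 2
        omega
      have h2 : (N : ℝ) ≤ 2 * ((N - N / 2 : ℕ) : ℝ) := by
        have : N ≤ 2 * (N - N / 2) := by omega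
        exact_mod_cast this
      have h3 : (N : ℝ) * b N ≤ 2 * ((N - N / 2 : ℕ) : ℝ) * b N :=
        mul_le_mul_of_nonneg_right h2 (hb0 N)
      have h4 := ha0 N
      rw [hsum1] at hcard
      nlinarith
    have hhalf : Tendsto (fun N : ℕ => N / 2) atTop atTop :=
      tendsto_atTop.mpr fun C => eventually_atTop.2 ⟨2 * C, fun N hN => by omega⟩
    have hupper : Tendsto (fun N : ℕ => 2 * a (N / 2)) atTop (𝓝 0) := by
      have := (ha_to0.comp hhalf).const_mul 2
      simpa using this
    exact squeeze_zero (fun N => mul_nonneg (Nat.cast_nonneg N) (hb0 N)) key hupper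
  -- telescoping of d
  have Pd : ∀ n N, ∑ m ∈ range N, d (n + m) = b n - b (n + N) := by
    intro n N
    induction N with
    | zero => simp
    | succ N ih =>
      have e : n + (N + 1) = n + N + 1 := rfl
      rw [Finset.sum_range_succ, ih, hdn (n + N), e]
      ring
  -- key partial-sum identity for (m+1) * d
  have P3 : ∀ n N, ∑ m ∈ range N, ((m : ℝ) + 1) * d (n + m)
      = (∑ m ∈ range N, b (n + m)) - N * b (n + N) := by
    intro n N
    induction N with
    | zero => simp
    | succ N ih =>
      have e : n + (N + 1) = n + N + 1 := rfl
      rw [Finset.sum_range_succ, Finset.sum_range_succ, ih, hdn (n + N), e]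
      push_cast
      ring
  -- the triangles representation: HasSum
  have T3 : ∀ n, HasSum (fun m : ℕ => ((m : ℝ) + 1) * d (n + m)) (a n) := by
    intro n
    have hnn : ∀ m : ℕ, 0 ≤ ((m : ℝ) + 1) * d (n + m) :=
      fun m => mul_nonneg (by positivity) (hd0 _)
    have hs : Summable fun m : ℕ => ((m : ℝ) + 1) * d (n + m) := by
      apply summable_of_sum_range_le hnn
      intro N
      rw [P3]
      have h1 := sum_b_le n N
      have h2 : 0 ≤ (N : ℝ) * b (n + N) := mul_nonneg (Nat.cast_nonneg N) (hb0 _)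
      linarith
    rw [hs.hasSum_iff_tendsto_nat]
    have hfe : (fun N => ∑ m ∈ range N, ((m : ℝ) + 1) * d (n + m))
        = fun N => (∑ m ∈ range N, b (n + m)) - N * b (n + N) := funext (P3 n)
    rw [hfe]
    have h1 : Tendsto (fun N => ∑ m ∈ range N, b (n + m)) atTop (𝓝 (a n)) := by
      have : (fun N => ∑ m ∈ range N, b (n + m)) = fun N => a n - a (n + N) :=
        funext (Pb n)
      rw [this]
      simpa using tendsto_const_nhds.sub (tail_tendsto a ha_to0 n)
    have h2 : Tendsto (fun N : ℕ => (N : ℝ) * b (n + N)) atTop (𝓝 0) := by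
      apply squeeze_zero (fun N => mul_nonneg (Nat.cast_nonneg N) (hb0 _))
        (fun N => ?_) hNb
      exact mul_le_mul_of_nonneg_left (hanti (by omega)) (Nat.cast_nonneg N)
    simpa using h1.sub h2
  -- representation with triangle kernels, global version
  have rep : ∀ k : ℕ, HasSum (fun m : ℕ => d m * max 0 ((m : ℝ) + 1 - k)) (a k) := by
    intro k
    have h2 : ∀ m : ℕ, d (m + k) * max 0 (((m + k : ℕ) : ℝ) + 1 - k)
        = ((m : ℝ) + 1) * d (k + m) := by
      intro m
      have hc : (((m + k : ℕ) : ℝ) + 1 - k) = (m : ℝ) + 1 := by push_cast; ring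
      rw [hc, max_eq_right (by positivity), Nat.add_comm m k]
      ring
    have h1 : HasSum (fun m : ℕ => d (m + k) * max 0 (((m + k : ℕ) : ℝ) + 1 - k)) (a k) := by
      have hfe : (fun m : ℕ => d (m + k) * max 0 (((m + k : ℕ) : ℝ) + 1 - k))
          = fun m : ℕ => ((m : ℝ) + 1) * d (k + m) := funext h2
      rw [hfe]
      exact T3 k
    have h3 := (hasSum_nat_add_iff (f := fun m : ℕ => d m * max 0 ((m : ℝ) + 1 - k)) k).mp h1
    have h4 : ∑ i ∈ range k, d i * max 0 ((i : ℝ) + 1 - k) = 0 := by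
      apply Finset.sum_eq_zero
      intro i hi
      have hik : i < k := Finset.mem_range.mp hi
      have : (i : ℝ) + 1 - k ≤ 0 := by
        have : (i : ℝ) + 1 ≤ k := by exact_mod_cast hik
        linarith
      rw [max_eq_left this, mul_zero]
    simpa [h4] using h3
  -- summability of (m+1)^2 * d m
  have P4 : ∀ N, ∑ m ∈ range N, ((m : ℝ) + 1) ^ 2 * d m
      = ∑ m ∈ range N, (2 * (m : ℝ) + 1) * b m - (N : ℝ) ^ 2 * b N := by
    intro N
    induction N with
    | zero => simp
    | succ N ih =>
      rw [Finset.sum_range_succ, Finset.sum_range_succ, ih, hdn N]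
      push_cast
      ring
  have PR : ∀ N, ∑ m ∈ range N, ((m : ℝ) + 1) * b m
      = ∑ m ∈ range N, a m - (N : ℝ) * a N := by
    intro N
    induction N with
    | zero => simp
    | succ N ih =>
      rw [Finset.sum_range_succ, Finset.sum_range_succ, ih, hbn N]
      push_cast
      ring
  have T4 : Summable (fun m : ℕ => ((m : ℝ) + 1) ^ 2 * d m) := by
    apply summable_of_sum_range_le (c := 2 * ∑' n, a n)
      (fun m => mul_nonneg (by positivity) (hd0 m))
    intro N
    rw [P4]
    have h1 : ∑ m ∈ range N, (2 * (m : ℝ) + 1) * b m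
        ≤ 2 * ∑ m ∈ range N, ((m : ℝ) + 1) * b m := by
      rw [Finset.mul_sum]
      apply Finset.sum_le_sum
      intro m _
      have := hb0 m
      nlinarith
    have h2 : ∑ m ∈ range N, a m ≤ ∑' n, a n :=
      Summable.sum_le_tsum (range N) (fun _ _ => ha0 _) hasum
    have h3 : 0 ≤ (N : ℝ) ^ 2 * b N := mul_nonneg (by positivity) (hb0 N)
    have h4 : 0 ≤ (N : ℝ) * a N := mul_nonneg (Nat.cast_nonneg N) (ha0 N)
    rw [PR] at h1
    linarith
  -- the double sum
  set u : ℕ → ℕ → ℝ := fun m k => d m * max 0 ((m : ℝ) + 1 - k) * stmt1c θ k with hu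
  set w : ℕ → ℕ → ℝ := fun m k => d m * max 0 ((m : ℝ) + 1 - k) * 2 with hw
  have hmax_nonneg : ∀ (m k : ℕ), (0 : ℝ) ≤ max 0 ((m : ℝ) + 1 - k) := fun m k => le_max_left _ _
  have hw_nonneg : ∀ m k, 0 ≤ w m k := fun m k =>
    mul_nonneg (mul_nonneg (hd0 m) (hmax_nonneg m k)) (by norm_num)
  have hvanish : ∀ (m k : ℕ), k ∉ range (m + 1) → max 0 ((m : ℝ) + 1 - k) = 0 := by
    intro m k hk
    apply max_eq_left
    have : m + 1 ≤ k := by simpa [Finset.mem_range] using hk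
    have : ((m : ℝ)) + 1 ≤ k := by exact_mod_cast this
    linarith
  have hw_row : ∀ m, Summable (fun k => w m k) := by
    intro m
    apply summable_of_ne_finset_zero (s := range (m + 1))
    intro k hk
    rw [hw]
    simp only
    rw [hvanish m k hk, mul_zero, zero_mul]
  have hw_row_val : ∀ m, ∑' k, w m k = ∑ k ∈ range (m + 1), w m k := by
    intro m
    apply tsum_eq_sum
    intro k hk
    rw [hw]
    simp only
    rw [hvanish m k hk, mul_zero, zero_mul]
  have hw_row_bound : ∀ m, ∑' k, w m k ≤ 2 * (((m : ℝ) + 1) ^ 2 * d m) := by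
    intro m
    rw [hw_row_val]
    calc ∑ k ∈ range (m + 1), w m k
        ≤ ∑ k ∈ range (m + 1), d m * ((m : ℝ) + 1) * 2 := by
          apply Finset.sum_le_sum
          intro k _
          rw [hw]
          simp only
          have h1 : max 0 ((m : ℝ) + 1 - k) ≤ (m : ℝ) + 1 := by
            apply max_le (by positivity)
            have : (0 : ℝ) ≤ k := Nat.cast_nonneg k
            linarith
          have h2 := hd0 m
          nlinarith [hmax_nonneg m k]
      _ = 2 * (((m : ℝ) + 1) ^ 2 * d m) := by
          rw [Finset.sum_const, Finset.card_range, nsmul_eq_mul]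
          push_cast
          ring
  have hw_sum : Summable (fun p : ℕ × ℕ => w p.1 p.2) := by
    rw [summable_prod_of_nonneg (f := fun p : ℕ × ℕ => w p.1 p.2) (fun p => hw_nonneg p.1 p.2)]
    constructor
    · exact fun m => hw_row m
    · apply Summable.of_nonneg_of_le (fun m => tsum_nonneg fun k => hw_nonneg m k)
        hw_row_bound
      exact T4.mul_left 2
  have hu_abs_le : ∀ (m k : ℕ), |u m k| ≤ w m k := by
    intro m k
    rw [hu, hw]
    simp only
    rw [abs_mul]
    have h1 : |d m * max 0 ((m : ℝ) + 1 - k)| = d m * max 0 ((m : ℝ) + 1 - k) :=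
      abs_of_nonneg (mul_nonneg (hd0 m) (hmax_nonneg m k))
    have h2 : |stmt1c θ k| ≤ 2 := by
      rw [stmt1c, abs_mul]
      have hcos := Real.abs_cos_le_one ((k : ℝ) * θ)
      have hif : |(if k = 0 then (1 : ℝ) else 2)| ≤ 2 := by
        split_ifs <;> norm_num
      calc |(if k = 0 then (1 : ℝ) else 2)| * |Real.cos ((k : ℝ) * θ)|
          ≤ 2 * 1 := by
            apply mul_le_mul hif hcos (abs_nonneg _) (by norm_num)
        _ = 2 := by norm_num
    rw [h1]
    have h3 : 0 ≤ d m * max 0 ((m : ℝ) + 1 - k) := mul_nonneg (hd0 m) (hmax_nonneg m k)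
    nlinarith
  have hu_sum : Summable (fun p : ℕ × ℕ => u p.1 p.2) := by
    apply Summable.of_abs
    apply Summable.of_nonneg_of_le (fun p => abs_nonneg _) (fun p => ?_) hw_sum
    exact hu_abs_le p.1 p.2
  have hcomm : ∑' (k : ℕ) (m : ℕ), u m k = ∑' (m : ℕ) (k : ℕ), u m k :=
    Summable.tsum_comm (f := u) (by exact hu_sum)
  have hLHS : ∑' (k : ℕ) (m : ℕ), u m k = ∑' k, a k * stmt1c θ k := by
    apply tsum_congr
    intro k
    rw [hu]
    simp only
    rw [tsum_mul_right, (rep k).tsum_eq]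
  have hRHS : 0 ≤ ∑' (m : ℕ) (k : ℕ), u m k := by
    apply tsum_nonneg
    intro m
    have hval : ∑' k, u m k = ∑ k ∈ range (m + 1), u m k := by
      apply tsum_eq_sum
      intro k hk
      rw [hu]
      simp only
      rw [hvanish m k hk, mul_zero, zero_mul]
    rw [hval]
    have hmax_in : ∀ k ∈ range (m + 1), max 0 ((m : ℝ) + 1 - k) = (m : ℝ) + 1 - k := by
      intro k hk
      apply max_eq_right
      have : (k : ℝ) ≤ m := by exact_mod_cast Nat.lt_succ_iff.mp (Finset.mem_range.mp hk)
      linarith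
    have hsum_eq : ∑ k ∈ range (m + 1), u m k
        = d m * ∑ k ∈ range (m + 1), (((m + 1 : ℕ) : ℝ) - k) * stmt1c θ k := by
      rw [Finset.mul_sum]
      apply Finset.sum_congr rfl
      intro k hk
      rw [hu]
      simp only
      rw [hmax_in k hk]
      push_cast
      ring
    rw [hsum_eq]
    apply mul_nonneg (hd0 m)
    -- ∑_{k < M} (M - k) * c k = 2 ∑ (M-k) cos kθ - M ≥ 0 via Fejér
    set M := m + 1 with hM
    have hsplit : ∑ k ∈ range M, (((M : ℕ) : ℝ) - k) * stmt1c θ k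
        = 2 * ∑ k ∈ range M, (((M : ℕ) : ℝ) - k) * Real.cos (k * θ) - M := by
      have hterm : ∀ k ∈ range M, (((M : ℕ) : ℝ) - k) * stmt1c θ k
          = 2 * ((((M : ℕ) : ℝ) - k) * Real.cos (k * θ))
            - (if k = 0 then (((M : ℕ) : ℝ) - k) * Real.cos (k * θ) else 0) := by
        intro k _
        rw [stmt1c]
        split_ifs <;> ring
      rw [Finset.sum_congr rfl hterm, Finset.sum_sub_distrib, ← Finset.mul_sum]
      congr 1
      rw [Finset.sum_ite_eq' (range M) 0 (fun k => (((M : ℕ) : ℝ) - k) * Real.cos (k * θ))]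
      simp [hM]
    rw [hsplit, stmt1_fejer θ M]
    positivity
  rw [← hLHS, hcomm]
  exact hRHS

end

/-- If `f : ℤ → ℝ` is even, nonnegative, summable, and discretely convex on the
positive integers, then its Fourier transform `∑ f(z) cos (zθ)` is nonnegative. -/
theorem stmt_1 (f : ℤ → ℝ)
    (heven : ∀ z : ℤ, f (-z) = f z)
    (hnonneg : ∀ z : ℤ, 0 ≤ f z)
    (hsum : Summable fun z : ℤ => |f z|)
    (hconv : ∀ z : ℤ, 1 ≤ z → 0 ≤ f (z + 1) - 2 * f z + f (z - 1))
    (θ : ℝ) :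
    0 ≤ ∑' z : ℤ, f z * Real.cos ((z : ℝ) * θ) := by
  set a : ℕ → ℝ := fun n => f n with ha
  have ha0 : ∀ n, 0 ≤ a n := fun n => hnonneg n
  have hasum : Summable a := by
    have h1 : Summable fun n : ℕ => |f (n : ℤ)| :=
      hsum.comp_injective (fun x y h => by exact_mod_cast h)
    exact h1.of_abs
  have haconv : ∀ n : ℕ, 0 ≤ a n - 2 * a (n + 1) + a (n + 2) := by
    intro n
    have h := hconv ((n : ℤ) + 1) (by omega)
    have e1 : ((n : ℤ) + 1 + 1) = ((n + 2 : ℕ) : ℤ) := by push_cast; ring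
    have e2 : ((n : ℤ) + 1 - 1) = ((n : ℕ) : ℤ) := by ring
    have e3 : ((n : ℤ) + 1) = ((n + 1 : ℕ) : ℤ) := by push_cast; ring
    rw [e1, e2, e3] at h
    simp only [ha]
    linarith
  have hcore := stmt1_core ha0 hasum haconv θ
  set F : ℤ → ℝ := fun z => f z * Real.cos ((z : ℝ) * θ) with hF
  have habs_nat : Summable fun n : ℕ => |f (n : ℤ)| := by
    have := hsum.comp_injective (Nat.cast_injective : Function.Injective (Nat.cast : ℕ → ℤ))
    simpa [Function.comp_def] using this
  have habs_shift : Summable fun n : ℕ => |f ((n : ℤ) + 1)| := by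
    have hinj : Function.Injective (fun n : ℕ => (n : ℤ) + 1) := by
      intro x y h
      simp only at h
      exact_mod_cast add_right_cancel h
    have := hsum.comp_injective hinj
    simpa [Function.comp_def] using this
  have hf_nat : Summable fun n : ℕ => F (n : ℤ) := by
    apply Summable.of_abs
    apply Summable.of_nonneg_of_le (fun n => abs_nonneg _) (fun n => ?_) habs_nat
    simp only [hF, abs_mul]
    calc |f (n : ℤ)| * |Real.cos ((((n : ℤ)) : ℝ) * θ)| ≤ |f (n : ℤ)| * 1 :=
          mul_le_mul_of_nonneg_left (Real.abs_cos_le_one _) (abs_nonneg _)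
      _ = |f (n : ℤ)| := mul_one _
  have hf_shift : Summable fun n : ℕ => f ((n : ℤ) + 1) * Real.cos (((n : ℝ) + 1) * θ) := by
    apply Summable.of_abs
    apply Summable.of_nonneg_of_le (fun n => abs_nonneg _) (fun n => ?_) habs_shift
    rw [abs_mul]
    calc |f ((n : ℤ) + 1)| * |Real.cos (((n : ℝ) + 1) * θ)| ≤ |f ((n : ℤ) + 1)| * 1 :=
          mul_le_mul_of_nonneg_left (Real.abs_cos_le_one _) (abs_nonneg _)
      _ = |f ((n : ℤ) + 1)| := mul_one _
  have hneg_eq : ∀ n : ℕ,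
      f ((n : ℤ) + 1) * Real.cos (((n : ℝ) + 1) * θ) = F (-((n : ℤ) + 1)) := by
    intro n
    have h1 : f (-((n : ℤ) + 1)) = f ((n : ℤ) + 1) := heven _
    simp only [hF, h1]
    congr 1
    push_cast
    rw [neg_mul, Real.cos_neg]
  have hf_neg : Summable fun n : ℕ => F (-((n : ℤ) + 1)) :=
    hf_shift.congr hneg_eq
  have hsplit := tsum_of_nat_of_neg_add_one hf_nat hf_neg
  set X : ℝ := ∑' n : ℕ, f ((n : ℤ) + 1) * Real.cos (((n : ℝ) + 1) * θ) with hX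
  have e2 : ∑' n : ℕ, F (-((n : ℤ) + 1)) = X := (tsum_congr hneg_eq).symm
  have e1 : ∑' n : ℕ, F (n : ℤ) = f 0 + X := by
    rw [Summable.tsum_eq_zero_add hf_nat]
    congr 1
    · simp [hF]
    · apply tsum_congr
      intro n
      simp only [hF]
      push_cast
      ring_nf
  -- relate the core sum
  have hcsum : Summable fun k : ℕ => a k * stmt1c θ k := by
    apply Summable.of_abs
    apply Summable.of_nonneg_of_le (fun n => abs_nonneg _) (fun k => ?_)
      (habs_nat.mul_left 2)
    rw [abs_mul]
    have h2 : |stmt1c θ k| ≤ 2 := by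
      rw [stmt1c, abs_mul]
      have hcos := Real.abs_cos_le_one ((k : ℝ) * θ)
      have hif : |(if k = 0 then (1 : ℝ) else 2)| ≤ 2 := by split_ifs <;> norm_num
      calc |(if k = 0 then (1 : ℝ) else 2)| * |Real.cos ((k : ℝ) * θ)| ≤ 2 * 1 :=
            mul_le_mul hif hcos (abs_nonneg _) (by norm_num)
        _ = 2 := by norm_num
    have h3 : |a k| = |f (k : ℤ)| := rfl
    calc |a k| * |stmt1c θ k| ≤ |a k| * 2 :=
          mul_le_mul_of_nonneg_left h2 (abs_nonneg _)
      _ = 2 * |f (k : ℤ)| := by rw [h3]; ring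
  have e_core : ∑' k : ℕ, a k * stmt1c θ k = f 0 + 2 * X := by
    rw [Summable.tsum_eq_zero_add hcsum]
    have h0 : a 0 * stmt1c θ 0 = f 0 := by
      simp [ha, stmt1c]
    have h1 : ∑' k : ℕ, a (k + 1) * stmt1c θ (k + 1) = 2 * X := by
      rw [hX, ← tsum_mul_left]
      apply tsum_congr
      intro k
      simp only [ha, stmt1c, Nat.succ_ne_zero, if_false]
      push_cast
      ring_nf
    rw [h0, h1]
  rw [hF] at hsplit
  rw [hsplit, e1, e2]
  rw [e_core] at hcore
  linarith
end

section
/- Let 0 < γ < 1, a > 0, b ≥ 0 with a(1−γ²) ≥ 2bγ, and define f(z) = (a + b|z|)γ^{|z|} for z ∈ ℤ. Then ∑_{z∈ℤ} f(z) e^{izθ} ≥ 0 for all θ ∈ ℝ. -/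
lemma aux_summable (a b : ℝ) {w : ℂ} (hw : ‖w‖ < 1) :
    Summable (fun n : ℕ => ((a : ℂ) + b * n) * w ^ n) := by
  have h1 : Summable (fun n : ℕ => (a : ℂ) * w ^ n) :=
    (summable_geometric_of_norm_lt_one hw).mul_left _
  have h2 : Summable (fun n : ℕ => (b : ℂ) * ((n : ℂ) * w ^ n)) := by
    have := summable_pow_mul_geometric_of_norm_lt_one (R := ℂ) 1 hw
    simpa [pow_one] using this.mul_left (b : ℂ)
  have := h1.add h2
  convert this using 2 with n
  ring

lemma aux_tsum (a b : ℝ) {w : ℂ} (hw : ‖w‖ < 1) :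
    ∑' n : ℕ, ((a : ℂ) + b * n) * w ^ n
      = a * (1 - w)⁻¹ + b * (w / (1 - w) ^ 2) := by
  have h1 : Summable (fun n : ℕ => (a : ℂ) * w ^ n) :=
    (summable_geometric_of_norm_lt_one hw).mul_left _
  have h2 : Summable (fun n : ℕ => (b : ℂ) * ((n : ℂ) * w ^ n)) := by
    have := summable_pow_mul_geometric_of_norm_lt_one (R := ℂ) 1 hw
    simpa [pow_one] using this.mul_left (b : ℂ)
  calc ∑' n : ℕ, ((a : ℂ) + b * n) * w ^ n
      = ∑' n : ℕ, ((a : ℂ) * w ^ n + (b : ℂ) * ((n : ℂ) * w ^ n)) := by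
        congr 1; funext n; ring
    _ = (∑' n : ℕ, (a : ℂ) * w ^ n) + ∑' n : ℕ, (b : ℂ) * ((n : ℂ) * w ^ n) :=
        Summable.tsum_add h1 h2
    _ = a * (1 - w)⁻¹ + b * (w / (1 - w) ^ 2) := by
        rw [tsum_mul_left, tsum_mul_left, tsum_geometric_of_norm_lt_one hw,
          tsum_coe_mul_geometric_of_norm_lt_one hw]

open ComplexOrder in
/-- Nonnegativity of the Fourier transform of `f(z) = (a + b|z|) γ^{|z|}`
when `a(1-γ²) ≥ 2bγ` (nonnegativity in the partial order on `ℂ`,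
the sum being real). -/
theorem stmt_3 (γ a b : ℝ) (hγ0 : 0 < γ) (hγ1 : γ < 1) (ha : 0 < a) (hb : 0 ≤ b)
    (hab : 2 * b * γ ≤ a * (1 - γ ^ 2)) (θ : ℝ) :
    0 ≤ ∑' z : ℤ, (((a + b * |(z : ℝ)|) * γ ^ z.natAbs : ℝ) : ℂ)
        * Complex.exp ((z : ℂ) * θ * Complex.I) := by
  set w : ℂ := (γ : ℂ) * Complex.exp ((θ : ℂ) * Complex.I) with hw_def
  set v : ℂ := (γ : ℂ) * Complex.exp (-((θ : ℂ) * Complex.I)) with hv_def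
  have hnw : ‖w‖ < 1 := by
    rw [hw_def]
    simp only [norm_mul, Complex.norm_real, Real.norm_eq_abs,
      Complex.norm_exp_ofReal_mul_I, mul_one]
    rwa [abs_of_pos hγ0]
  have hnv : ‖v‖ < 1 := by
    rw [hv_def]
    have : -((θ : ℂ) * Complex.I) = ((-θ : ℝ) : ℂ) * Complex.I := by push_cast; ring
    rw [this]
    simp only [norm_mul, Complex.norm_real, Real.norm_eq_abs,
      Complex.norm_exp_ofReal_mul_I, mul_one]
    rwa [abs_of_pos hγ0]
  set F : ℤ → ℂ := fun z => (((a + b * |(z : ℝ)|) * γ ^ z.natAbs : ℝ) : ℂ)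
      * Complex.exp ((z : ℂ) * θ * Complex.I) with hF
  have hpos : ∀ n : ℕ, F n = ((a : ℂ) + b * n) * w ^ n := by
    intro n
    have h1 : ((((n : ℤ) : ℂ)) * θ * Complex.I) = (n : ℕ) * ((θ : ℂ) * Complex.I) := by
      push_cast; ring
    simp only [hF, hw_def, h1, Complex.exp_nat_mul]
    have h2 : |(((n : ℤ) : ℝ))| = (n : ℝ) := by
      rw [Int.cast_natCast]; exact abs_of_nonneg (Nat.cast_nonneg n)
    rw [h2, Int.natAbs_natCast]
    push_cast
    ring
  have hneg : ∀ n : ℕ, F (-((n : ℤ) + 1)) = ((a : ℂ) + b * ((n : ℕ) + 1)) * v ^ (n + 1) := by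
    intro n
    have h1 : ((((-((n : ℤ) + 1)) : ℤ) : ℂ)) * θ * Complex.I
        = ((n + 1 : ℕ) : ℂ) * (-((θ : ℂ) * Complex.I)) := by push_cast; ring
    have h2 : |(((-((n : ℤ) + 1)) : ℤ) : ℝ)| = ((n : ℝ) + 1) := by
      push_cast
      rw [abs_neg]
      exact abs_of_nonneg (by positivity)
    have h3 : (-((n : ℤ) + 1)).natAbs = n + 1 := by
      rw [Int.natAbs_neg]
      exact_mod_cast Int.natAbs_natCast (n + 1)
    simp only [hF, h1, Complex.exp_nat_mul, h2, h3, hv_def]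
    push_cast
    ring
  have hsum_pos : Summable (fun n : ℕ => F n) := by
    have := aux_summable a b hnw
    exact this.congr (fun n => (hpos n).symm)
  have hsum_v := aux_summable a b hnv
  have hsum_neg : Summable (fun n : ℕ => F (-((n : ℤ) + 1))) := by
    have : Summable (fun n : ℕ => ((a : ℂ) + b * ((n : ℕ) + 1)) * v ^ (n + 1)) := by
      have := (summable_nat_add_iff 1).mpr hsum_v
      exact this.congr (fun n => by push_cast; ring_nf)
    exact this.congr (fun n => (hneg n).symm)
  have hsplit := tsum_of_nat_of_neg_add_one hsum_pos hsum_neg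
  -- compute positive part
  have hTpos : ∑' n : ℕ, F n = a * (1 - w)⁻¹ + b * (w / (1 - w) ^ 2) := by
    rw [tsum_congr hpos, aux_tsum a b hnw]
  -- compute negative part
  have hTneg : ∑' n : ℕ, F (-((n : ℤ) + 1))
      = a * (1 - v)⁻¹ + b * (v / (1 - v) ^ 2) - a := by
    have h0 : ∑' n : ℕ, F (-((n : ℤ) + 1))
        = ∑' n : ℕ, ((a : ℂ) + b * ((n + 1 : ℕ) : ℂ)) * v ^ (n + 1) := by
      refine tsum_congr fun n => ?_
      rw [hneg n]; push_cast; ring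
    rw [h0]
    have hz := Summable.tsum_eq_zero_add hsum_v
    have : (((a : ℂ) + b * (0 : ℕ)) * v ^ (0 : ℕ)) = (a : ℂ) := by simp
    rw [this] at hz
    have := aux_tsum a b hnv
    rw [this] at hz
    have heq : ∑' n : ℕ, ((a : ℂ) + b * ((n + 1 : ℕ) : ℂ)) * v ^ (n + 1)
        = ∑' n : ℕ, ((a : ℂ) + b * ((n : ℕ) + 1)) * v ^ (n + 1) := by
      refine tsum_congr fun n => by push_cast; ring
    rw [heq] at hz
    rw [heq]
    linear_combination -hz
  rw [hsplit, hTpos, hTneg]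
  -- the negative-branch quantity is the conjugate of the positive one
  have hvw : v = (starRingEnd ℂ) w := by
    rw [hw_def, hv_def, map_mul, Complex.conj_ofReal, ← Complex.exp_conj]
    congr 1
    simp [Complex.conj_ofReal]
  have hconj : a * (1 - v)⁻¹ + b * (v / (1 - v) ^ 2)
      = (starRingEnd ℂ) (a * (1 - w)⁻¹ + b * (w / (1 - w) ^ 2)) := by
    rw [hvw]
    simp [map_add, map_mul, map_div₀, map_inv₀, map_sub, map_pow, Complex.conj_ofReal]
  set T : ℂ := a * (1 - w)⁻¹ + b * (w / (1 - w) ^ 2) with hT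
  rw [hconj]
  have hre : T + (starRingEnd ℂ) T - a = ((2 * T.re - a : ℝ) : ℂ) := by
    rw [Complex.add_conj]
    push_cast
    ring
  have : T + ((starRingEnd ℂ) T - a) = T + (starRingEnd ℂ) T - a := by ring
  rw [this, hre]
  rw [Complex.zero_le_real]
  -- now the real inequality
  set x : ℝ := Real.cos θ with hx
  set y : ℝ := Real.sin θ with hy
  have hwre : w.re = γ * x := by
    rw [hw_def]
    simp [Complex.mul_re, Complex.exp_ofReal_mul_I_re, Complex.exp_ofReal_mul_I_im, hx]
  have hwim : w.im = γ * y := by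
    rw [hw_def]
    simp [Complex.mul_im, Complex.exp_ofReal_mul_I_re, Complex.exp_ofReal_mul_I_im, hy]
  have hTre : T.re = a * ((1 - γ * x) / ((1 - γ * x) ^ 2 + (γ * y) ^ 2))
        + b * ((γ * x * ((1 - γ * x) ^ 2 - (γ * y) ^ 2))
                 / (((1 - γ * x) ^ 2 + (γ * y) ^ 2) ^ 2)
             + (γ * y * (2 * (1 - γ * x) * (-(γ * y))))
                 / (((1 - γ * x) ^ 2 + (γ * y) ^ 2) ^ 2)) := by
    rw [hT]
    simp only [Complex.add_re, Complex.mul_re, Complex.ofReal_re, Complex.ofReal_im,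
      Complex.inv_re, Complex.inv_im, Complex.div_re, Complex.normSq_apply, Complex.sub_re,
      Complex.sub_im, Complex.one_re, Complex.one_im, Complex.mul_im, pow_two, hwre, hwim]
    ring
  rw [hTre]
  have hxy : x ^ 2 + y ^ 2 = 1 := by
    rw [hx, hy]; exact (Real.cos_sq_add_sin_sq θ)
  have hx1 : x ≤ 1 := Real.cos_le_one θ
  have hx2 : -1 ≤ x := Real.neg_one_le_cos θ
  clear_value x y
  clear hx hy hwre hwim
  have h : (γ * y) ^ 2 = γ ^ 2 - (γ * x) ^ 2 := by linear_combination γ ^ 2 * hxy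
  have e1 : γ * y * (2 * (1 - γ * x) * (-(γ * y))) = -2 * (1 - γ * x) * ((γ * y) ^ 2) := by
    ring
  rw [e1, h]
  have hd0 : 0 < 1 - 2 * γ * x + γ ^ 2 := by nlinarith
  have hd : (1 - γ * x) ^ 2 + (γ ^ 2 - (γ * x) ^ 2) = 1 - 2 * γ * x + γ ^ 2 := by ring
  rw [hd]
  have key : 2 * (a * ((1 - γ * x) / (1 - 2 * γ * x + γ ^ 2))
        + b * ((γ * x * ((1 - γ * x) ^ 2 - (γ ^ 2 - (γ * x) ^ 2))) / (1 - 2 * γ * x + γ ^ 2) ^ 2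
             + (-2 * (1 - γ * x) * (γ ^ 2 - (γ * x) ^ 2)) / (1 - 2 * γ * x + γ ^ 2) ^ 2)) - a
      = ((a * (1 - γ ^ 2) + 2 * b * γ * x) * (1 - γ) ^ 2
          + (a * (1 - γ ^ 2) - 2 * b * γ) * (1 - x) * (2 * γ)) / (1 - 2 * γ * x + γ ^ 2) ^ 2 := by
    field_simp
    ring
  rw [key]
  apply div_nonneg _ (by positivity)
  have h1 : 0 ≤ a * (1 - γ ^ 2) + 2 * b * γ * x := by
    nlinarith [mul_nonneg (mul_nonneg hb hγ0.le) (by linarith : (0:ℝ) ≤ x + 1)]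
  have h2 : 0 ≤ (a * (1 - γ ^ 2) - 2 * b * γ) * (1 - x) * (2 * γ) :=
    mul_nonneg (mul_nonneg (by linarith) (by linarith)) (by linarith)
  have h3 := mul_nonneg h1 (sq_nonneg (1 - γ))
  linarith
end
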